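/- Correctness of the split/NEQ₃ to Triple Multicut translation for equalities: in the constructed graph where each split constraint c contributes a vertex z_c adjacent to the variable-vertices of its positive part, two variable-vertices v_i and v_j are connected in the graph if and only if the conjunction of all (equality parts of the) constraints logically implies x_i = x_j, i.e., every assignment satisfying all constraints assigns x_i and x_j equal values, and moreover the transitive closure of the imposed equalities is exactly the connectivity relation. -/

import Mathlib

/-- In the gadget graph built from the equality parts of split constraints
(one vertex per variable, one vertex `z_c` per constraint `c`, with edges
from `z_c` to the variables of its positive part `P c`), two variable
vertices are connected iff the equality `x i = x j` is entailed by the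
conjunction of all imposed equalities. -/
theorem split_gadget_connectivity (n m : ℕ) (P : Fin m → Finset (Fin n)) :
    ∀ i j : Fin n,
      (SimpleGraph.fromRel (fun a b : Fin n ⊕ Fin m =>
        ∃ (v : Fin n) (c : Fin m), v ∈ P c ∧ a = Sum.inl v ∧ b = Sum.inr c)).Reachable
        (Sum.inl i) (Sum.inl j) ↔
      ∀ α : Fin n → ℕ,
        (∀ c : Fin m, ∀ p ∈ P c, ∀ p' ∈ P c, α p = α p') → α i = α j := by
  classical
  set G := SimpleGraph.fromRel (fun a b : Fin n ⊕ Fin m =>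
        ∃ (v : Fin n) (c : Fin m), v ∈ P c ∧ a = Sum.inl v ∧ b = Sum.inr c) with hG
  intro i j
  constructor
  · intro hr α hα
    let f : Fin n ⊕ Fin m → ℕ := fun a => match a with
      | Sum.inl v => α v
      | Sum.inr c => if h : (P c).Nonempty then α h.choose else 0
    have hadj : ∀ a b, G.Adj a b → f a = f b := by
      have key : ∀ (v : Fin n) (c : Fin m), v ∈ P c → f (Sum.inl v) = f (Sum.inr c) := by
        intro v c hv
        have hne : (P c).Nonempty := ⟨v, hv⟩
        simp only [f, dif_pos hne]
        exact hα c v hv hne.choose hne.choose_spec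
      rintro a b ⟨hne, ⟨v, c, hv, ha, hb⟩ | ⟨v, c, hv, hb, ha⟩⟩
      · subst ha; subst hb; exact key v c hv
      · subst ha; subst hb; exact (key v c hv).symm
    have hwalk : ∀ {a b : Fin n ⊕ Fin m}, G.Walk a b → f a = f b := by
      intro a b w
      induction w with
      | nil => rfl
      | cons h _ ih => exact (hadj _ _ h).trans ih
    obtain ⟨w⟩ := hr
    exact hwalk w
  · intro h
    by_contra hnr
    have hcon := h (fun v => if G.Reachable (Sum.inl i) (Sum.inl v) then 0 else 1) ?_
    · rw [if_pos (SimpleGraph.Reachable.refl _)] at hcon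
      by_cases hj : G.Reachable (Sum.inl i) (Sum.inl j)
      · exact hnr hj
      · rw [if_neg hj] at hcon; exact absurd hcon (by norm_num)
    · intro c p hp p' hp'
      have h1 : G.Adj (Sum.inl p) (Sum.inr c) := by
        rw [hG, SimpleGraph.fromRel_adj]
        exact ⟨by simp, Or.inl ⟨p, c, hp, rfl, rfl⟩⟩
      have h2 : G.Adj (Sum.inl p') (Sum.inr c) := by
        rw [hG, SimpleGraph.fromRel_adj]
        exact ⟨by simp, Or.inl ⟨p', c, hp', rfl, rfl⟩⟩
      have hpp' : G.Reachable (Sum.inl p) (Sum.inl p') :=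
        h1.reachable.trans h2.reachable.symm
      beta_reduce
      by_cases hrp : G.Reachable (Sum.inl i) (Sum.inl p)
      · rw [if_pos hrp, if_pos (hrp.trans hpp')]
      · rw [if_neg hrp, if_neg (fun hrq => hrp (hrq.trans hpp'.symm))]
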